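/- arXiv:2309.08459 — 2 statements merged into one kernel-verified Lean document; each statement's English description precedes it below -/
import Mathlib

section
/- Let d ≥ 3 be an integer. For every measurable function F : ℝ^{d-1} × ℝ → [0,∞], ∫₀^∞ (2√(2π r³))^{-1} [ ∫_{ℝ^{d-1}} (2π r)^{-(d-1)/2} e^{-‖x‖²/(2r)} F(x,r) dx ] dr = ∫_{ℝ^{d-1}} (Γ(d/2) / (2 π^{d/2} ‖x‖^{d})) [ ∫₀^∞ e^{-1/(2t)} (2^{d/2} Γ(d/2) t^{d/2+1})^{-1} F(x, t‖x‖²) dt ] dx, where all integrals are Lebesgue integrals of nonnegative functions (the outer r-integrals over (0,∞), the x-integrals over ℝ^{d-1}, equivalently over ℝ^{d-1}∖{0} since {0} is Lebesgue-null), with values in [0,∞]. -/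
open MeasureTheory Real Set
open scoped ENNReal

lemma lintegral_Ioi_mul_left' (c : ℝ) (hc : 0 < c) (f : ℝ → ℝ≥0∞) (hf : Measurable f) :
    ∫⁻ r in Ioi (0:ℝ), f r = ENNReal.ofReal c * ∫⁻ t in Ioi (0:ℝ), f (c * t) := by
  have hmap : Measure.map (fun t : ℝ => c * t) (volume.restrict (Ioi 0)) =
      (ENNReal.ofReal |c⁻¹| • volume).restrict (Ioi 0) := by
    rw [← Real.map_volume_mul_left (ne_of_gt hc),
      Measure.restrict_map (measurable_const_mul c) measurableSet_Ioi]
    congr 1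
    ext y
    simp [mul_pos_iff_of_pos_left, hc]
  have h1 : ∫⁻ t in Ioi (0:ℝ), f (c * t) =
      ∫⁻ r, f r ∂(Measure.map (fun t : ℝ => c * t) (volume.restrict (Ioi 0))) := by
    rw [lintegral_map hf (measurable_const_mul c)]
  rw [h1, hmap, Measure.restrict_smul, lintegral_smul_measure, smul_eq_mul, ← mul_assoc,
    abs_of_pos (inv_pos.2 hc), ← ENNReal.ofReal_mul hc.le, mul_inv_cancel₀ (ne_of_gt hc),
    ENNReal.ofReal_one, one_mul]

lemma key_real (p G s t : ℝ) (hG : 0 < G) (hs : 0 < s) (ht : 0 < t) :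
    s ^ 2 * ((2 * Real.sqrt (2 * Real.pi * (s ^ 2 * t) ^ 3))⁻¹ *
      ((2 * Real.pi * (s ^ 2 * t)) ^ (-(p - 1) / 2) *
        Real.exp (-s ^ 2 / (2 * (s ^ 2 * t)))))
    = G / (2 * Real.pi ^ (p / 2) * s ^ p) *
      (Real.exp (-1 / (2 * t)) / ((2 : ℝ) ^ (p / 2) * G * t ^ (p / 2 + 1))) := by
  have hπ := Real.pi_pos
  have h2π : (0:ℝ) < 2 * Real.pi := by positivity
  have hu : (0:ℝ) < s ^ 2 * t := by positivity
  have hexp : -s ^ 2 / (2 * (s ^ 2 * t)) = -1 / (2 * t) := by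
    field_simp
  have h1 : Real.sqrt (2 * Real.pi * (s ^ 2 * t) ^ 3)
      = (2 * Real.pi) ^ ((1:ℝ)/2) * (s ^ 2 * t) ^ ((3:ℝ)/2) := by
    rw [Real.sqrt_eq_rpow, Real.mul_rpow h2π.le (by positivity),
      ← Real.rpow_natCast (s ^ 2 * t) 3, ← Real.rpow_mul hu.le]
    norm_num
  have h2 : (2 * Real.pi * (s ^ 2 * t)) ^ (-(p - 1) / 2)
      = (2 * Real.pi) ^ (-(p - 1) / 2) * (s ^ 2 * t) ^ (-(p - 1) / 2) :=
    Real.mul_rpow h2π.le hu.le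
  have h4 : (2 * Real.pi) ^ (-(p - 1) / 2)
      = (2 * Real.pi) ^ ((1:ℝ)/2) * ((2:ℝ) ^ (p/2) * Real.pi ^ (p/2))⁻¹ := by
    rw [← Real.mul_rpow (by norm_num) hπ.le, ← Real.rpow_neg h2π.le,
      ← Real.rpow_add h2π]
    congr 1; ring
  have h5 : (s ^ 2 * t) ^ (-(p - 1) / 2)
      = (s ^ 2 * t) ^ ((3:ℝ)/2) * ((s ^ 2 * t) ^ (p/2 + 1))⁻¹ := by
    rw [← Real.rpow_neg hu.le, ← Real.rpow_add hu]
    congr 1; ring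
  have h6a : ((s:ℝ) ^ 2) ^ (p/2 + 1) = s ^ p * s ^ 2 := by
    rw [← Real.rpow_natCast s 2, ← Real.rpow_mul hs.le, ← Real.rpow_add hs]
    congr 1; push_cast; ring
  have h6 : (s ^ 2 * t) ^ (p/2 + 1) = (s ^ p * s ^ 2) * t ^ (p/2 + 1) := by
    rw [Real.mul_rpow (by positivity) ht.le, h6a]
  have e1 : (0:ℝ) < (2 * Real.pi) ^ ((1:ℝ)/2) := by positivity
  have e2 : (0:ℝ) < (s ^ 2 * t) ^ ((3:ℝ)/2) := by positivity
  have e3 : (0:ℝ) < (2:ℝ) ^ (p/2) := by positivity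
  have e4 : (0:ℝ) < Real.pi ^ (p/2) := by positivity
  have e5 : (0:ℝ) < s ^ p := by positivity
  have e6 : (0:ℝ) < t ^ (p/2 + 1) := by positivity
  rw [hexp, h1, h2, h4, h5, h6]
  field_simp

/-- Disintegration of the Brownian excursion endpoint-and-duration measure
(Proposition 5.3): `n₊ = ∫ dx (Γ(d/2)/(2π^{d/2}‖x‖^d)) γ_x`, expressed as an
equality of Lebesgue integrals against any nonnegative measurable `F`. -/
theorem excursion_measure_disintegration (d : ℕ) (hd : 3 ≤ d)
    (F : EuclideanSpace ℝ (Fin (d - 1)) × ℝ → ℝ≥0∞) (hF : Measurable F) :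
    ∫⁻ r in Ioi (0 : ℝ),
        ENNReal.ofReal (2 * Real.sqrt (2 * Real.pi * r ^ 3))⁻¹ *
          ∫⁻ x : EuclideanSpace ℝ (Fin (d - 1)),
            ENNReal.ofReal
              ((2 * Real.pi * r) ^ (-((d : ℝ) - 1) / 2) *
                Real.exp (-‖x‖ ^ 2 / (2 * r))) * F (x, r)
      = ∫⁻ x : EuclideanSpace ℝ (Fin (d - 1)),
          ENNReal.ofReal
            (Real.Gamma ((d : ℝ) / 2) /
              (2 * Real.pi ^ ((d : ℝ) / 2) * ‖x‖ ^ (d : ℝ))) *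
            ∫⁻ t in Ioi (0 : ℝ),
              ENNReal.ofReal
                (Real.exp (-1 / (2 * t)) /
                  ((2 : ℝ) ^ ((d : ℝ) / 2) * Real.Gamma ((d : ℝ) / 2) *
                    t ^ ((d : ℝ) / 2 + 1))) *
                F (x, t * ‖x‖ ^ 2) := by
  let E := EuclideanSpace ℝ (Fin (d - 1))
  haveI : Nonempty (Fin (d - 1)) := ⟨⟨0, by omega⟩⟩
  set p : ℝ := (d : ℝ) with hp
  have hG : 0 < Real.Gamma (p / 2) := Real.Gamma_pos_of_pos (by
    have : (3:ℝ) ≤ p := by rw [hp]; exact_mod_cast hd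
    linarith)
  -- measurable pieces
  have hA : Measurable fun r : ℝ =>
      ENNReal.ofReal (2 * Real.sqrt (2 * Real.pi * r ^ 3))⁻¹ :=
    Measurable.ennreal_ofReal <|
      ((measurable_const.mul ((measurable_const.mul
        ((continuous_pow 3).measurable)).sqrt))).inv
  have hB : Measurable fun q : E × ℝ =>
      ENNReal.ofReal ((2 * Real.pi * q.2) ^ (-(p - 1) / 2) *
        Real.exp (-‖q.1‖ ^ 2 / (2 * q.2))) := by
    apply Measurable.ennreal_ofReal
    apply Measurable.mul
    · exact (measurable_const.mul measurable_snd).pow measurable_const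
    · exact ((((measurable_fst.norm.pow measurable_const).neg).div
        (measurable_const.mul measurable_snd)).exp)
  -- full integrand, as function on E × ℝ
  set g : E × ℝ → ℝ≥0∞ := fun q =>
    ENNReal.ofReal (2 * Real.sqrt (2 * Real.pi * q.2 ^ 3))⁻¹ *
      (ENNReal.ofReal ((2 * Real.pi * q.2) ^ (-(p - 1) / 2) *
        Real.exp (-‖q.1‖ ^ 2 / (2 * q.2))) * F q) with hg
  have hgm : Measurable g := ((hA.comp measurable_snd).mul (hB.mul hF))
  -- Step 1: pull the constant inside and swap
  have step1 : ∫⁻ r in Ioi (0 : ℝ),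
      ENNReal.ofReal (2 * Real.sqrt (2 * Real.pi * r ^ 3))⁻¹ *
        ∫⁻ x : E, ENNReal.ofReal ((2 * Real.pi * r) ^ (-(p - 1) / 2) *
            Real.exp (-‖x‖ ^ 2 / (2 * r))) * F (x, r)
      = ∫⁻ x : E, ∫⁻ r in Ioi (0 : ℝ), g (x, r) := by
    have : ∀ r : ℝ, ENNReal.ofReal (2 * Real.sqrt (2 * Real.pi * r ^ 3))⁻¹ *
        ∫⁻ x : E, ENNReal.ofReal ((2 * Real.pi * r) ^ (-(p - 1) / 2) *
            Real.exp (-‖x‖ ^ 2 / (2 * r))) * F (x, r)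
        = ∫⁻ x : E, g (x, r) := fun r =>
      (lintegral_const_mul' _ _ ENNReal.ofReal_ne_top).symm
    simp_rw [this]
    exact lintegral_lintegral_swap (μ := volume.restrict (Ioi 0))
      (f := fun r x => g (x, r))
      ((hgm.comp measurable_swap).aemeasurable)
  rw [step1]
  -- Step 2: a.e. x is nonzero
  have h0 : ∀ᵐ x : E ∂volume, x ≠ 0 := by
    rw [ae_iff]
    have : {x : E | ¬ x ≠ 0} = {0} := by ext y; simp
    rw [this]
    exact measure_singleton 0
  refine lintegral_congr_ae (h0.mono fun x hx => ?_)
  have hs : 0 < ‖x‖ := norm_pos_iff.2 hx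
  dsimp only
  -- Step 3: change of variables r = ‖x‖² t
  rw [lintegral_Ioi_mul_left' (‖x‖ ^ 2) (by positivity) (fun r => g (x, r))
    (hgm.comp (measurable_prodMk_left))]
  rw [← lintegral_const_mul' _ _ ENNReal.ofReal_ne_top,
    ← lintegral_const_mul' _ _ ENNReal.ofReal_ne_top]
  refine setLIntegral_congr_fun measurableSet_Ioi (fun t ht => ?_)
  simp only [hg]
  rw [mul_comm t (‖x‖ ^ 2)]
  have ht' : 0 < t := mem_Ioi.1 ht
  rw [← mul_assoc, ← mul_assoc, ← ENNReal.ofReal_mul (by positivity),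
    ← ENNReal.ofReal_mul (by positivity)]
  conv_rhs => rw [← mul_assoc]
  rw [← ENNReal.ofReal_mul (div_nonneg hG.le (by positivity))]
  congr 1
  rw [mul_assoc]
  exact congrArg ENNReal.ofReal (key_real p (Real.Gamma (p / 2)) ‖x‖ t hG hs ht')
end

section
/- Let d ≥ 3 be an integer, α ∈ (0,2), and set ω = d − 1 + α/2. Let g : ℝ → [0,∞] be measurable. Then for every measurable function F : ℝ^{d-1} × ℝ → [0,∞], ∫₀^∞ (2√(2π r³))^{-1} [ ∫_{ℝ^{d-1}} r^{-(d-1)/α} g(r^{-1/α}‖x‖) F(x,r) dx ] dr = ∫_{ℝ^{d-1}} ‖x‖^{-ω} [ ∫₀^∞ (2√(2π))^{-1} u^{-(1+ω/α)} g(u^{-1/α}) F(x, u‖x‖^{α}) du ] dx, where all integrals are Lebesgue integrals of nonnegative functions (the r- and u-integrals over (0,∞), the x-integrals over ℝ^{d-1}, equivalently over ℝ^{d-1}∖{0} since {0} is Lebesgue-null), with values in [0,∞]. -/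
open MeasureTheory Real Set
open scoped ENNReal

lemma lintegral_Ioi_scale {c : ℝ} (hc : 0 < c) {f : ℝ → ℝ≥0∞} (hf : Measurable f) :
    ∫⁻ r in Ioi (0:ℝ), f r = ENNReal.ofReal c * ∫⁻ u in Ioi (0:ℝ), f (c * u) := by
  have hind : (Ioi (0:ℝ)).indicator (fun u => f (c * u))
      = fun u => (Ioi (0:ℝ)).indicator f (c * u) := by
    funext u
    by_cases hu : u ∈ Ioi (0:ℝ)
    · rw [indicator_of_mem hu]
      exact (indicator_of_mem (mul_pos hc hu) f).symm
    · rw [indicator_of_notMem hu]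
      refine (indicator_of_notMem ?_ f).symm
      simp only [mem_Ioi, not_lt] at hu ⊢
      exact mul_nonpos_of_nonneg_of_nonpos hc.le hu
  have h1 : ∫⁻ u in Ioi (0:ℝ), f (c * u)
      = ENNReal.ofReal c⁻¹ * ∫⁻ r in Ioi (0:ℝ), f r := by
    rw [← lintegral_indicator measurableSet_Ioi, hind,
      ← lintegral_map (hf.indicator measurableSet_Ioi) (measurable_const_mul c),
      Real.map_volume_mul_left hc.ne', lintegral_smul_measure,
      lintegral_indicator measurableSet_Ioi, abs_of_pos (inv_pos.mpr hc), smul_eq_mul]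
  rw [h1, ← mul_assoc, ← ENNReal.ofReal_mul hc.le, mul_inv_cancel₀ hc.ne',
    ENNReal.ofReal_one, one_mul]

lemma coef_eq (α ω t n u : ℝ) (hα : 0 < α) (hω : ω = t + α / 2)
    (hn : 0 < n) (hu : 0 < u) :
    n ^ α * (2 * Real.sqrt (2 * Real.pi * (n ^ α * u) ^ 3))⁻¹ *
        (n ^ α * u) ^ (-t / α)
      = n ^ (-ω) * ((2 * Real.sqrt (2 * Real.pi))⁻¹ * u ^ (-(1 + ω / α))) := by
  have hc : (0:ℝ) < n ^ α := Real.rpow_pos_of_pos hn α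
  have hcu : (0:ℝ) < n ^ α * u := mul_pos hc hu
  set E : ℝ := -((3:ℝ)/2) + -t / α with hE
  have e3 : Real.sqrt (2 * Real.pi * (n ^ α * u) ^ 3)
      = Real.sqrt (2 * Real.pi) * (n ^ α * u) ^ ((3:ℝ)/2) := by
    rw [Real.sqrt_mul (by positivity), Real.sqrt_eq_rpow ((n ^ α * u) ^ 3),
      ← Real.rpow_natCast (n ^ α * u) 3, ← Real.rpow_mul hcu.le]
    norm_num
  have h9 : α + α * E = -ω := by rw [hE, hω]; field_simp; ring
  have h10 : E = -(1 + ω / α) := by rw [hE, hω]; field_simp; ring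
  calc n ^ α * (2 * Real.sqrt (2 * Real.pi * (n ^ α * u) ^ 3))⁻¹ *
        (n ^ α * u) ^ (-t / α)
      = (2 * Real.sqrt (2 * Real.pi))⁻¹ *
          (n ^ α * (((n ^ α * u) ^ ((3:ℝ)/2))⁻¹ * (n ^ α * u) ^ (-t / α))) := by
        rw [e3]; ring
    _ = (2 * Real.sqrt (2 * Real.pi))⁻¹ * (n ^ α * (n ^ α * u) ^ E) := by
        rw [hE, Real.rpow_add hcu, Real.rpow_neg hcu.le]
    _ = (2 * Real.sqrt (2 * Real.pi))⁻¹ * (n ^ α * ((n ^ α) ^ E * u ^ E)) := by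
        rw [Real.mul_rpow hc.le hu.le]
    _ = (2 * Real.sqrt (2 * Real.pi))⁻¹ * (n ^ α * (n ^ (α * E) * u ^ E)) := by
        rw [← Real.rpow_mul hn.le]
    _ = (2 * Real.sqrt (2 * Real.pi))⁻¹ * (n ^ (α + α * E) * u ^ E) := by
        rw [Real.rpow_add hn]; ring
    _ = n ^ (-ω) * ((2 * Real.sqrt (2 * Real.pi))⁻¹ * u ^ (-(1 + ω / α))) := by
        rw [h9, h10]; ring

lemma arg_eq (α n u : ℝ) (hα : 0 < α) (hn : 0 < n) (hu : 0 < u) :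
    (n ^ α * u) ^ (-1 / α) * n = u ^ (-1 / α) := by
  have hc : (0:ℝ) < n ^ α := Real.rpow_pos_of_pos hn α
  rw [Real.mul_rpow hc.le hu.le, ← Real.rpow_mul hn.le,
    show α * (-1 / α) = -1 by field_simp, Real.rpow_neg_one]
  field_simp

set_option maxHeartbeats 1000000 in
/-- Disintegration over the endpoint of the excursion measure `n₊^α` of the
process `Z^d = (X^{d-1}, Z)` (Proposition 5.10): endpoint weight proportional
to `‖x‖^{-ω_d}`, `ω_d = d − 1 + α/2`, with rescaled duration `u = r/‖x‖^α`. -/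
theorem stable_excursion_measure_disintegration (d : ℕ) (hd : 3 ≤ d)
    (α : ℝ) (hα0 : 0 < α) (hα2 : α < 2) (ω : ℝ) (hω : ω = (d : ℝ) - 1 + α / 2)
    (g : ℝ → ℝ≥0∞) (hg : Measurable g)
    (F : EuclideanSpace ℝ (Fin (d - 1)) × ℝ → ℝ≥0∞) (hF : Measurable F) :
    ∫⁻ r in Ioi (0 : ℝ),
        ENNReal.ofReal (2 * Real.sqrt (2 * Real.pi * r ^ 3))⁻¹ *
          ∫⁻ x : EuclideanSpace ℝ (Fin (d - 1)),
            ENNReal.ofReal (r ^ (-((d : ℝ) - 1) / α)) *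
              g (r ^ (-1 / α) * ‖x‖) * F (x, r)
      = ∫⁻ x : EuclideanSpace ℝ (Fin (d - 1)),
          ENNReal.ofReal (‖x‖ ^ (-ω)) *
            ∫⁻ u in Ioi (0 : ℝ),
              ENNReal.ofReal
                ((2 * Real.sqrt (2 * Real.pi))⁻¹ * u ^ (-(1 + ω / α))) *
                g (u ^ (-1 / α)) * F (x, u * ‖x‖ ^ α) := by
  have hH : Measurable (Function.uncurry fun (r : ℝ)
      (x : EuclideanSpace ℝ (Fin (d - 1))) =>
      ENNReal.ofReal (2 * Real.sqrt (2 * Real.pi * r ^ 3))⁻¹ *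
        (ENNReal.ofReal (r ^ (-((d : ℝ) - 1) / α)) *
          g (r ^ (-1 / α) * ‖x‖) * F (x, r))) := by
    unfold Function.uncurry
    fun_prop
  haveI : Nonempty (Fin (d - 1)) := ⟨⟨0, by omega⟩⟩
  have hae : ∀ᵐ x : EuclideanSpace ℝ (Fin (d - 1)), x ≠ 0 := by
    rw [ae_iff]
    simpa using measure_singleton (0 : EuclideanSpace ℝ (Fin (d - 1)))
  calc ∫⁻ r in Ioi (0 : ℝ),
        ENNReal.ofReal (2 * Real.sqrt (2 * Real.pi * r ^ 3))⁻¹ *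
          ∫⁻ x : EuclideanSpace ℝ (Fin (d - 1)),
            ENNReal.ofReal (r ^ (-((d : ℝ) - 1) / α)) *
              g (r ^ (-1 / α) * ‖x‖) * F (x, r)
      = ∫⁻ r in Ioi (0 : ℝ), ∫⁻ x : EuclideanSpace ℝ (Fin (d - 1)),
          ENNReal.ofReal (2 * Real.sqrt (2 * Real.pi * r ^ 3))⁻¹ *
            (ENNReal.ofReal (r ^ (-((d : ℝ) - 1) / α)) *
              g (r ^ (-1 / α) * ‖x‖) * F (x, r)) :=
        lintegral_congr fun r =>
          (lintegral_const_mul' _ _ ENNReal.ofReal_ne_top).symm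
    _ = ∫⁻ x : EuclideanSpace ℝ (Fin (d - 1)), ∫⁻ r in Ioi (0 : ℝ),
          ENNReal.ofReal (2 * Real.sqrt (2 * Real.pi * r ^ 3))⁻¹ *
            (ENNReal.ofReal (r ^ (-((d : ℝ) - 1) / α)) *
              g (r ^ (-1 / α) * ‖x‖) * F (x, r)) :=
        lintegral_lintegral_swap hH.aemeasurable
    _ = ∫⁻ x : EuclideanSpace ℝ (Fin (d - 1)),
          ENNReal.ofReal (‖x‖ ^ (-ω)) *
            ∫⁻ u in Ioi (0 : ℝ),
              ENNReal.ofReal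
                ((2 * Real.sqrt (2 * Real.pi))⁻¹ * u ^ (-(1 + ω / α))) *
                g (u ^ (-1 / α)) * F (x, u * ‖x‖ ^ α) := by
        refine lintegral_congr_ae (hae.mono fun x hx => ?_)
        beta_reduce
        have hn : 0 < ‖x‖ := norm_pos_iff.mpr hx
        have hc : 0 < ‖x‖ ^ α := Real.rpow_pos_of_pos hn α
        have hmeas : Measurable fun r : ℝ =>
            ENNReal.ofReal (2 * Real.sqrt (2 * Real.pi * r ^ 3))⁻¹ *
              (ENNReal.ofReal (r ^ (-((d : ℝ) - 1) / α)) *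
                g (r ^ (-1 / α) * ‖x‖) * F (x, r)) :=
          by fun_prop
        refine (lintegral_Ioi_scale hc hmeas).trans ?_
        rw [← lintegral_const_mul' (ENNReal.ofReal (‖x‖ ^ α)) _
            ENNReal.ofReal_ne_top,
          ← lintegral_const_mul' (ENNReal.ofReal (‖x‖ ^ (-ω))) _
            ENNReal.ofReal_ne_top]
        refine setLIntegral_congr_fun measurableSet_Ioi
          (fun u hu => ?_)
        have hu : (0:ℝ) < u := hu
        have hFv : F (x, ‖x‖ ^ α * u) = F (x, u * ‖x‖ ^ α) := by rw [mul_comm]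
        rw [arg_eq α ‖x‖ u hα0 hn hu, hFv]
        have key := coef_eq α ω ((d:ℝ) - 1) ‖x‖ u hα0 hω hn hu
        calc ENNReal.ofReal (‖x‖ ^ α) *
              (ENNReal.ofReal (2 * Real.sqrt (2 * Real.pi * (‖x‖ ^ α * u) ^ 3))⁻¹ *
                (ENNReal.ofReal ((‖x‖ ^ α * u) ^ (-((d : ℝ) - 1) / α)) *
                  g (u ^ (-1 / α)) * F (x, u * ‖x‖ ^ α)))
            = ENNReal.ofReal (‖x‖ ^ α *
                  (2 * Real.sqrt (2 * Real.pi * (‖x‖ ^ α * u) ^ 3))⁻¹ *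
                  (‖x‖ ^ α * u) ^ (-((d : ℝ) - 1) / α)) *
                (g (u ^ (-1 / α)) * F (x, u * ‖x‖ ^ α)) := by
              rw [ENNReal.ofReal_mul (by positivity),
                ENNReal.ofReal_mul (by positivity)]
              ring
          _ = ENNReal.ofReal (‖x‖ ^ (-ω)) *
                (ENNReal.ofReal
                    ((2 * Real.sqrt (2 * Real.pi))⁻¹ * u ^ (-(1 + ω / α))) *
                  g (u ^ (-1 / α)) * F (x, u * ‖x‖ ^ α)) := by
              rw [key, ENNReal.ofReal_mul (by positivity)]
              ring
end
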